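/- For every n ≥ 1, the number I(n) of T-cycles of exact length n in ℚ[(2)] (orbits {x, T(x), …, T^{n−1}(x)} with x ∈ ℚ[(2)], T^n(x) = x, and T^m(x) ≠ x for 1 ≤ m < n) satisfies I(n) = (1/n) ∑_{d | n} μ(d) · 2^{n/d}, where μ is the Möbius function (Eq. 2.5 of Lagarias 1990). -/

import Mathlib

/-- The `3x+1` function on rationals: `T x = x/2` if the numerator of `x` is even,
and `T x = (3x+1)/2` if the numerator of `x` is odd. -/
noncomputable def T (x : ℚ) : ℚ := if Even x.num then x / 2 else (3 * x + 1) / 2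

/-- The set of `T`-cycles of exact length `n` in `ℚ[(2)]`. -/
def cyclesOfLength (n : ℕ) : Set (Set ℚ) :=
  {c | ∃ x : ℚ, Odd x.den ∧ T^[n] x = x ∧ (∀ m, 1 ≤ m → m < n → T^[m] x ≠ x) ∧
    c = {y | ∃ j : ℕ, T^[j] x = y}}

namespace Collatz
local notation "v" => padicValRat 2

lemma pvn_odd {n : ℕ} (h : Odd n) : padicValNat 2 n = 0 :=
  padicValNat.eq_zero_of_not_dvd (by have := Nat.odd_iff.1 h; omega)

lemma v_den_odd (x : ℚ) : Odd x.den ↔ 0 ≤ v x := by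
  rw [padicValRat_def]
  rcases Nat.even_or_odd x.den with he | ho
  · simp only [Nat.not_odd_iff_even.2 he, false_iff, not_le]
    have hnum : ¬ (2:ℤ) ∣ x.num := by
      intro h
      have h2 : (2:ℕ) ∣ x.num.natAbs := Int.natCast_dvd_natCast.mp (by simpa [Int.natAbs_dvd_natAbs] using h)
      exact absurd (Nat.Coprime.eq_one_of_dvd (x.reduced.coprime_dvd_left h2) he.two_dvd) (by norm_num)
    rw [padicValInt.eq_zero_of_not_dvd hnum]
    have hne : padicValNat 2 x.den ≠ 0 := by
      intro h0
      rcases padicValNat.eq_zero_iff.1 h0 with h | h | h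
      · norm_num at h
      · exact x.den_nz h
      · exact h he.two_dvd
    omega
  · rw [pvn_odd ho]; simp [ho]

lemma padicValInt_one_le {m : ℤ} (hm : m ≠ 0) (he : Even m) : 1 ≤ padicValInt 2 m := by
  have key : (((2:ℕ):ℤ) ^ 1 ∣ m) ↔ (m = 0 ∨ 1 ≤ padicValInt 2 m) := padicValInt_dvd_iff 1 m
  rcases he with ⟨k, hk⟩
  rcases key.1 ⟨k, by push_cast; omega⟩ with h | h
  · exact absurd h hm
  · exact h

lemma v_num_even {x : ℚ} (hx : x ≠ 0) (hd : Odd x.den) : Even x.num ↔ 1 ≤ v x := by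
  rw [padicValRat_def, pvn_odd hd]
  constructor
  · intro h
    have := padicValInt_one_le (Rat.num_ne_zero.2 hx) h
    omega
  · intro h
    have key := padicValInt_dvd_iff (p := 2) 1 x.num
    rcases key.2 (Or.inr (by omega)) with ⟨k, hk⟩
    exact ⟨k, by push_cast at hk; omega⟩

lemma v_two : v (2:ℚ) = 1 := by
  have := padicValRat.self (p := 2) (by norm_num)
  simpa using this

lemma v_half {x : ℚ} (hx : x ≠ 0) : v (x/2) = v x - 1 := by
  rw [padicValRat.div (p := 2) hx (by norm_num), v_two]

lemma v_three : v (3:ℚ) = 0 := by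
  have : ((3:ℤ):ℚ) = (3:ℚ) := by norm_num
  rw [← this, padicValRat.of_int, padicValInt.eq_zero_of_not_dvd (by norm_num)]
  simp

lemma v_3x {x : ℚ} (hx : x ≠ 0) : v (3*x) = v x := by
  rw [padicValRat.mul (p := 2) (by norm_num) hx, v_three, zero_add]

lemma three_x_add_one_ne_zero {x : ℚ} (hv : v x ≠ 0) : 3*x+1 ≠ 0 := by
  intro h
  have hx : x ≠ 0 := by rintro rfl; norm_num at h
  have h3 : 3*x = -1 := by linarith [h]
  have : v (3*x) = 0 := by rw [h3]; simpa using padicValRat.one (p := 2)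
  rw [v_3x hx] at this
  exact hv this

lemma v_one : v (1:ℚ) = 0 := padicValRat.one

noncomputable def f (b : Bool) (y : ℚ) : ℚ := if b then (3*y+1)/2 else y/2

def pv (x : ℚ) : Bool := decide (¬ Even x.num)

lemma T_eq (x : ℚ) : T x = f (pv x) x := by
  by_cases h : Even x.num <;> simp [T, f, pv, h]

lemma mul_den (x : ℚ) : x * (x.den:ℚ) = (x.num:ℚ) := by
  have hd : ((x.den:ℚ)) ≠ 0 := by exact_mod_cast x.den_nz
  exact ((div_eq_iff hd).1 (Rat.num_div_den x)).symm

lemma three_mul_add_one_eq (x : ℚ) :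
    3*x+1 = ((3*x.num + x.den : ℤ) : ℚ) / ((x.den : ℤ) : ℚ) := by
  have hd : ((x.den : ℤ) : ℚ) ≠ 0 := by exact_mod_cast x.den_nz
  rw [eq_div_iff hd]
  push_cast
  rw [add_mul, mul_assoc, mul_den]
  ring

lemma v_3x1 {x : ℚ} (hd : Odd x.den) (hn : ¬ Even x.num) (h0 : 3*x+1 ≠ 0) :
    1 ≤ v (3*x+1) := by
  rw [three_mul_add_one_eq]
  have hden : ((x.den:ℤ):ℚ) ≠ 0 := by exact_mod_cast x.den_nz
  have hnum : ((3*x.num + x.den : ℤ):ℚ) ≠ 0 := by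
    intro h
    exact h0 (by rw [three_mul_add_one_eq, h, zero_div])
  rw [padicValRat.div (p := 2) hnum hden, padicValRat.of_int, padicValRat.of_int]
  have h1 : 1 ≤ padicValInt 2 (3*x.num + x.den) := by
    apply padicValInt_one_le (by exact_mod_cast hnum)
    have e1 : x.num % 2 = 1 := Int.odd_iff.1 (Int.not_even_iff_odd.1 hn)
    have e2 : (x.den:ℤ) % 2 = 1 := by exact_mod_cast Nat.odd_iff.1 hd
    rw [Int.even_iff]; omega
  have h2 : padicValInt 2 (x.den : ℤ) = 0 := by
    rw [padicValInt.of_nat, pvn_odd hd]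
  omega

/-- T preserves odd denominators. -/
lemma good_step {x : ℚ} (hd : Odd x.den) : Odd (T x).den := by
  by_cases hx : x = 0
  · subst hx; simp [T]
  by_cases he : Even x.num
  · have h1 : 1 ≤ v x := (v_num_even hx hd).1 he
    have : T x = x/2 := by simp [T, he]
    rw [this, v_den_odd, v_half hx]
    omega
  · have hTx : T x = (3*x+1)/2 := by simp [T, he]
    by_cases h0 : 3*x+1 = 0
    · rw [hTx, h0]; simp
    · rw [hTx, v_den_odd, v_half h0]
      have := v_3x1 hd he h0
      omega

/-- applying the wrong branch makes the denominator even. -/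
lemma bad_step {x : ℚ} (hd : Odd x.den) : ¬ Odd ((f (!pv x) x).den) := by
  rw [v_den_odd, not_le]
  by_cases he : Even x.num
  · have hb : (!pv x) = true := by simp [pv, he]
    rw [hb]
    simp only [f, if_true]
    by_cases hx : x = 0
    · subst hx
      norm_num
      rw [v_half (by norm_num), v_one]
      norm_num
    · have h1 : 1 ≤ v x := (v_num_even hx hd).1 he
      have h0 : 3*x+1 ≠ 0 := three_x_add_one_ne_zero (by omega)
      have hv31 : v (3*x+1) = 0 := by
        rw [add_comm]
        rw [padicValRat.add_eq_of_lt (p := 2) (by rwa [add_comm]) one_ne_zero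
          (mul_ne_zero (by norm_num) hx)
          (by rw [v_one, v_3x hx]; omega), v_one]
      rw [v_half h0, hv31]
      norm_num
  · have hx : x ≠ 0 := by rintro rfl; exact he (by simp)
    have hb : (!pv x) = false := by simp [pv, he]
    rw [hb]
    simp only [f, Bool.false_eq_true, if_false]
    have hv0 : v x = 0 := by
      have h1 := (v_den_odd x).1 hd
      have h2 := (v_num_even hx hd).not.1 he
      omega
    rw [v_half hx, hv0]
    norm_num

/-- even denominators stay even under both branches. -/
lemma worse_step {x : ℚ} (hd : ¬ Odd x.den) (b : Bool) : ¬ Odd ((f b x).den) := by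
  have hx : x ≠ 0 := by rintro rfl; exact hd (by simp)
  rw [v_den_odd, not_le] at hd ⊢
  cases b
  · simp only [f, if_false, Bool.false_eq_true]
    rw [v_half hx]; omega
  · simp only [f, if_true]
    have h0 : 3*x+1 ≠ 0 := three_x_add_one_ne_zero (by omega)
    have hv : v (3*x+1) = v x := by
      rw [padicValRat.add_eq_of_lt (p := 2) h0
        (mul_ne_zero (by norm_num) hx)
        one_ne_zero (by rw [v_one, v_3x hx]; omega), v_3x hx]
    rw [v_half h0, hv]; omega


noncomputable def applyL : List Bool → ℚ → ℚ
  | [], y => y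
  | b :: l, y => applyL l (f b y)

lemma applyL_affine (w : List Bool) :
    ∃ m : ℤ, ∀ y : ℚ, applyL w y = ((3:ℚ)^(w.count true) * y + (m:ℚ))/2^w.length := by
  induction w with
  | nil => exact ⟨0, fun y => by simp [applyL]⟩
  | cons b l ih =>
    obtain ⟨m', h⟩ := ih
    cases b
    · refine ⟨2*m', fun y => ?_⟩
      rw [show applyL (false :: l) y = applyL l (y/2) from rfl, h]
      simp only [List.count_cons, List.length_cons]
      push_cast
      have h2 : ((2:ℚ))^(l.length + 1) = 2^l.length * 2 := by ring
      rw [h2]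
      field_simp
      simp [mul_comm]
    · refine ⟨3^(l.count true) + 2*m', fun y => ?_⟩
      rw [show applyL (true :: l) y = applyL l ((3*y+1)/2) from rfl, h]
      simp only [List.count_cons, List.length_cons]
      norm_num
      push_cast
      have h2 : ((2:ℚ))^(l.length + 1) = 2^l.length * 2 := by ring
      have h3 : ((3:ℚ))^(l.count true + 1) = 3^l.count true * 3 := by ring
      rw [h2, h3]
      field_simp
      ring

lemma two_pow_ne_three_pow {n k : ℕ} (hn : 1 ≤ n) : ((2:ℚ))^n ≠ 3^k := by
  intro h
  have h' : ((2:ℤ))^n = 3^k := by exact_mod_cast h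
  have h1 : (2:ℤ) ∣ 2^n := dvd_pow_self 2 (by omega)
  rw [h'] at h1
  have := Int.Prime.dvd_pow' (p := 2) (by norm_num) h1
  norm_num at this

lemma fixed_unique {w : List Bool} (hw : w ≠ []) {y z : ℚ}
    (hy : applyL w y = y) (hz : applyL w z = z) : y = z := by
  obtain ⟨m, h⟩ := applyL_affine w
  have hn : 1 ≤ w.length := List.length_pos_iff.2 hw
  have hd : ((2:ℚ))^w.length - 3^(w.count true) ≠ 0 :=
    sub_ne_zero.2 (two_pow_ne_three_pow hn)
  have h2 : ((2:ℚ))^w.length ≠ 0 := by positivity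
  have ey : y * (2^w.length - 3^(w.count true)) = m := by
    have := h y
    rw [hy] at this
    field_simp at this
    linarith [this]
  have ez : z * (2^w.length - 3^(w.count true)) = m := by
    have := h z
    rw [hz] at this
    field_simp at this
    linarith [this]
  have := ey.trans ez.symm
  exact mul_right_cancel₀ hd this

lemma fixed_exists {w : List Bool} (hw : w ≠ []) :
    ∃ x : ℚ, Odd x.den ∧ applyL w x = x := by
  obtain ⟨m, h⟩ := applyL_affine w
  have hn : 1 ≤ w.length := List.length_pos_iff.2 hw
  obtain ⟨D, hD⟩ : ∃ D : ℤ, D = 2^w.length - 3^(w.count true) := ⟨_, rfl⟩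
  have hDodd : Odd D := by
    rw [hD]
    apply Even.sub_odd
    · exact (Int.even_pow.2 ⟨even_two, by omega⟩)
    · exact Odd.pow ⟨1, by ring⟩
  have hD0 : D ≠ 0 := by
    intro h0
    rw [hD] at h0
    exact two_pow_ne_three_pow hn (by
      have : ((2:ℤ))^w.length = 3^(w.count true) := by omega
      exact_mod_cast congrArg (Int.cast : ℤ → ℚ) this)
  refine ⟨(m:ℚ)/(D:ℚ), ?_, ?_⟩
  · -- odd denominator
    have hdvd : (((m:ℚ)/(D:ℚ)).den : ℤ) ∣ D := by
      rw [← Rat.divInt_eq_div]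
      exact Rat.den_dvd m D
    rcases Nat.even_or_odd ((m:ℚ)/(D:ℚ)).den with he | ho
    · exfalso
      have h2 : (2:ℤ) ∣ D := dvd_trans (by exact_mod_cast he.two_dvd) hdvd
      rcases hDodd with ⟨t, ht⟩
      omega
    · exact ho
  · have hDQ : ((D:ℚ)) ≠ 0 := by exact_mod_cast hD0
    have h2 : ((2:ℚ))^w.length ≠ 0 := by positivity
    rw [h ((m:ℚ)/(D:ℚ))]
    field_simp
    rw [hD]
    push_cast
    ring


open Function

lemma worse_applyL {x : ℚ} (h : ¬ Odd x.den) (w : List Bool) : ¬ Odd ((applyL w x).den) := by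
  induction w generalizing x with
  | nil => exact h
  | cons b l ih => exact ih (worse_step h b)

lemma follow {w : List Bool} {x : ℚ} (hd : Odd x.den) (ho : Odd ((applyL w x).den)) :
    applyL w x = T^[w.length] x ∧ ∀ i (h : i < w.length), w.get ⟨i, h⟩ = pv (T^[i] x) := by
  induction w generalizing x with
  | nil => simp [applyL]
  | cons b l ih =>
    have hb : b = pv x := by
      by_contra hne
      have hb' : b = !pv x := by cases b <;> cases hpv : pv x <;> simp_all
      rw [show applyL (b::l) x = applyL l (f b x) from rfl, hb'] at ho
      exact (worse_applyL (bad_step hd) l) ho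
    subst hb
    have hT : applyL (pv x :: l) x = applyL l (T x) := by
      rw [show applyL (pv x :: l) x = applyL l (f (pv x) x) from rfl, ← T_eq]
    rw [hT] at ho ⊢
    obtain ⟨h1, h2⟩ := ih (good_step hd) ho
    constructor
    · rw [h1, List.length_cons, Function.iterate_succ_apply]
    · intro i h
      cases i with
      | zero => simp
      | succ i =>
        have := h2 i (by simpa using h)
        simpa [Function.iterate_succ_apply] using this

lemma pv_apply {w : List Bool} {x : ℚ} (hd : Odd x.den)
    (hm : ∀ i (h : i < w.length), w.get ⟨i, h⟩ = pv (T^[i] x)) :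
    applyL w x = T^[w.length] x := by
  induction w generalizing x with
  | nil => simp [applyL]
  | cons b l ih =>
    have hb : b = pv x := by simpa using hm 0 (by simp)
    subst hb
    have hT : applyL (pv x :: l) x = applyL l (T x) := by
      rw [show applyL (pv x :: l) x = applyL l (f (pv x) x) from rfl, ← T_eq]
    rw [hT, ih (good_step hd) (fun i h => by
      have := hm (i+1) (by simpa using h)
      simpa [Function.iterate_succ_apply] using this),
      List.length_cons, Function.iterate_succ_apply]

/-- periodic points with odd denominator -/
def Fix (n : ℕ) : Set ℚ := {x | Odd x.den ∧ T^[n] x = x}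

noncomputable def parityVec (n : ℕ) (x : ℚ) : Fin n → Bool := fun i => pv (T^[i] x)

lemma Fix_bijOn (n : ℕ) (hn : 1 ≤ n) :
    Set.BijOn (parityVec n) (Fix n) Set.univ := by
  refine ⟨fun x _ => Set.mem_univ _, ?_, ?_⟩
  · rintro x ⟨hdx, hfx⟩ y ⟨hdy, hfy⟩ hxy
    have hlen : (List.ofFn (parityVec n x)).length = n := List.length_ofFn
    have hwne : (List.ofFn (parityVec n x)) ≠ [] := by
      intro h
      rw [h] at hlen
      simp at hlen
      omega
    have hax : applyL (List.ofFn (parityVec n x)) x = x := by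
      rw [pv_apply hdx (fun i h => by simp [List.get_ofFn, parityVec]), hlen, hfx]
    have hay : applyL (List.ofFn (parityVec n x)) y = y := by
      rw [pv_apply hdy (fun i h => by
        simp only [List.get_ofFn]
        exact congrFun hxy _), hlen, hfy]
    exact fixed_unique hwne hax hay
  · rintro u -
    have hlen : (List.ofFn u).length = n := List.length_ofFn
    have hwne : (List.ofFn u) ≠ [] := by
      intro h
      rw [h] at hlen
      simp at hlen
      omega
    obtain ⟨x, hdx, hax⟩ := fixed_exists hwne
    have ho : Odd ((applyL (List.ofFn u) x).den) := by rwa [hax]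
    obtain ⟨h1, h2⟩ := follow hdx ho
    refine ⟨x, ⟨hdx, by rw [← hlen, ← h1, hax]⟩, ?_⟩
    funext i
    have h3 : u i = pv (T^[(i:ℕ)] x) := by
      simpa [List.get_ofFn] using h2 i (by rw [hlen]; exact i.2)
    rw [parityVec, ← h3]

lemma Fix_finite (n : ℕ) (hn : 1 ≤ n) : (Fix n).Finite :=
  Set.Finite.of_finite_image (Set.toFinite _) (Fix_bijOn n hn).injOn

lemma Fix_ncard (n : ℕ) (hn : 1 ≤ n) : (Fix n).ncard = 2^n := by
  have h1 := Set.ncard_image_of_injOn (Fix_bijOn n hn).injOn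
  rw [(Fix_bijOn n hn).image_eq, Set.ncard_univ] at h1
  rw [← h1, Nat.card_eq_fintype_card]
  simp [Fintype.card_fun]

/-- points with odd denominator and exact minimal period `d` -/
def E (d : ℕ) : Set ℚ := {x | Odd x.den ∧ Function.minimalPeriod T x = d}

lemma oddden_iterate {x : ℚ} (hd : Odd x.den) (j : ℕ) : Odd ((T^[j] x).den) := by
  induction j with
  | zero => exact hd
  | succ j ih => rw [Function.iterate_succ_apply']; exact good_step ih

lemma E_eq_filter {d n : ℕ} (hn : 0 < n) (hdn : d ∣ n) :
    E d = {x ∈ Fix n | Function.minimalPeriod T x = d} := by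
  ext x
  constructor
  · rintro ⟨h1, h2⟩
    exact ⟨⟨h1, Function.isPeriodicPt_iff_minimalPeriod_dvd.2 (h2 ▸ hdn)⟩, h2⟩
  · rintro ⟨⟨h1, _⟩, h2⟩
    exact ⟨h1, h2⟩

lemma sum_E (n : ℕ) (hn : 0 < n) : ∑ d ∈ n.divisors, (E d).ncard = 2^n := by
  classical
  have hfin := Fix_finite n hn
  have hmap : ∀ x ∈ hfin.toFinset, Function.minimalPeriod T x ∈ n.divisors := by
    intro x hx
    rw [Set.Finite.mem_toFinset] at hx
    have hper : Function.IsPeriodicPt T n x := hx.2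
    exact Nat.mem_divisors.2 ⟨hper.minimalPeriod_dvd, by omega⟩
  have hcard := Finset.card_eq_sum_card_fiberwise hmap
  have hF : hfin.toFinset.card = 2^n := by
    rw [← Set.ncard_eq_toFinset_card _ hfin]
    exact Fix_ncard n hn
  rw [hF] at hcard
  rw [hcard]
  apply Finset.sum_congr rfl
  intro d hdmem
  have hdn : d ∣ n := (Nat.mem_divisors.1 hdmem).1
  rw [E_eq_filter hn hdn]
  have : {x ∈ Fix n | Function.minimalPeriod T x = d} =
      ↑(hfin.toFinset.filter fun x => Function.minimalPeriod T x = d) := by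
    ext x
    simp [Set.Finite.mem_toFinset]
  rw [this, Set.ncard_coe_finset]

lemma E_ncard (n : ℕ) (hn : 1 ≤ n) :
    ((E n).ncard : ℤ) = ∑ d ∈ n.divisors, ArithmeticFunction.moebius d * 2 ^ (n / d) := by
  have key := (ArithmeticFunction.sum_eq_iff_sum_smul_moebius_eq (R := ℤ)
    (f := fun d => ((E d).ncard : ℤ)) (g := fun m => 2^m)).1 ?_ n (by omega)
  · rw [← key, ← Nat.sum_divisorsAntidiagonal
      (fun d e => (ArithmeticFunction.moebius d : ℤ) * 2^e) (n := n)]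
    apply Finset.sum_congr rfl
    intro p _
    rw [smul_eq_mul]
  · intro m hm
    have := sum_E m hm
    exact_mod_cast this

lemma mem_E_iff {n : ℕ} (hn : 1 ≤ n) {x : ℚ} :
    x ∈ E n ↔ Odd x.den ∧ T^[n] x = x ∧ ∀ m, 1 ≤ m → m < n → T^[m] x ≠ x := by
  constructor
  · rintro ⟨h1, h2⟩
    refine ⟨h1, ?_, ?_⟩
    · have := Function.iterate_minimalPeriod (f := T) (x := x)
      rwa [h2] at this
    · intro m hm1 hmn heq
      have := Function.IsPeriodicPt.minimalPeriod_le (by omega)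
        (heq : Function.IsPeriodicPt T m x)
      omega
  · rintro ⟨h1, h2, h3⟩
    refine ⟨h1, ?_⟩
    have hper : Function.IsPeriodicPt T n x := h2
    have hdvd := hper.minimalPeriod_dvd
    have hpos := hper.minimalPeriod_pos (by omega)
    have hle : Function.minimalPeriod T x ≤ n := Nat.le_of_dvd (by omega) hdvd
    by_contra hne
    exact h3 _ hpos (by omega) Function.iterate_minimalPeriod

def orb (x : ℚ) : Set ℚ := {y | ∃ j : ℕ, T^[j] x = y}

lemma mem_orb_self (x : ℚ) : x ∈ orb x := ⟨0, rfl⟩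

lemma orb_subset {x y : ℚ} (hy : y ∈ orb x) : orb y ⊆ orb x := by
  obtain ⟨j, rfl⟩ := hy
  rintro z ⟨i, rfl⟩
  exact ⟨i + j, by rw [Function.iterate_add_apply]⟩

lemma orb_eq {x y : ℚ} {n : ℕ} (hn : 0 < n) (hper : Function.IsPeriodicPt T n x)
    (hy : y ∈ orb x) : orb y = orb x := by
  apply Set.Subset.antisymm (orb_subset hy)
  apply orb_subset
  obtain ⟨j, rfl⟩ := hy
  refine ⟨n * (j + 1) - j, ?_⟩
  rw [← Function.iterate_add_apply]
  have hj : n * (j + 1) - j + j = n * (j + 1) := by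
    have : j ≤ n * (j + 1) := by nlinarith
    omega
  rw [hj]
  exact hper.trans_dvd ⟨j + 1, rfl⟩

lemma orb_eq_image {x : ℚ} {n : ℕ} (hn : 0 < n) (hper : Function.IsPeriodicPt T n x) :
    orb x = ↑((Finset.range n).image (fun j => T^[j] x)) := by
  ext y
  simp only [orb, Set.mem_setOf_eq, Finset.coe_image, Finset.coe_range, Set.mem_image,
    Set.mem_Iio]
  constructor
  · rintro ⟨j, rfl⟩
    exact ⟨j % n, Nat.mod_lt _ hn, hper.iterate_mod_apply j⟩
  · rintro ⟨j, _, rfl⟩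
    exact ⟨j, rfl⟩

lemma orb_subset_E {n : ℕ} (hn : 1 ≤ n) {x : ℚ} (hx : x ∈ E n) : orb x ⊆ E n := by
  rintro y ⟨j, rfl⟩
  have hmem : x ∈ Function.periodicPts T :=
    Function.minimalPeriod_pos_iff_mem_periodicPts.1 (by rw [hx.2]; omega)
  exact ⟨oddden_iterate hx.1 j, (Function.minimalPeriod_apply_iterate hmem j).trans hx.2⟩

lemma E_card_eq (n : ℕ) (hn : 1 ≤ n) : (E n).ncard = n * (cyclesOfLength n).ncard := by
  classical
  have hEsub : E n ⊆ Fix n := fun x hx => ((mem_E_iff hn).1 hx).1.elim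
    (fun _ _ => ⟨((mem_E_iff hn).1 hx).1, ((mem_E_iff hn).1 hx).2.1⟩)
  have hEfin : (E n).Finite := (Fix_finite n hn).subset hEsub
  have hperE : ∀ x ∈ E n, Function.IsPeriodicPt T n x := fun x hx => ((mem_E_iff hn).1 hx).2.1
  have hminE : ∀ x ∈ E n, Function.minimalPeriod T x = n := fun x hx => hx.2
  have hcard := Finset.card_eq_sum_card_fiberwise
    (f := orb) (s := hEfin.toFinset) (t := hEfin.toFinset.image orb)
    (fun x hx => Finset.mem_image_of_mem orb hx)
  have hfiber : ∀ c ∈ hEfin.toFinset.image orb,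
      (hEfin.toFinset.filter (fun x => orb x = c)).card = n := by
    intro c hc
    obtain ⟨x0, hx0s, rfl⟩ := Finset.mem_image.1 hc
    have hx0 : x0 ∈ E n := hEfin.mem_toFinset.1 hx0s
    have hper0 := hperE x0 hx0
    have key : hEfin.toFinset.filter (fun x => orb x = orb x0) =
        (Finset.range n).image (fun j => T^[j] x0) := by
      ext y
      simp only [Finset.mem_filter, Set.Finite.mem_toFinset, Finset.mem_image,
        Finset.mem_range]
      constructor
      · rintro ⟨hyE, hyorb⟩
        have : y ∈ orb x0 := hyorb ▸ mem_orb_self y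
        rw [orb_eq_image (by omega) hper0] at this
        simpa using this
      · rintro ⟨j, hj, rfl⟩
        have hyorb : T^[j] x0 ∈ orb x0 := ⟨j, rfl⟩
        exact ⟨orb_subset_E hn hx0 hyorb, orb_eq (by omega) hper0 hyorb⟩
    rw [key]
    rw [Finset.card_image_of_injOn]
    · exact Finset.card_range n
    · intro i hi j hj hij
      have hmin : Function.minimalPeriod T x0 = n := hminE x0 hx0
      have hi' : i ∈ Set.Iio (Function.minimalPeriod T x0) := by rw [hmin]; simpa using hi
      have hj' : j ∈ Set.Iio (Function.minimalPeriod T x0) := by rw [hmin]; simpa using hj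
      exact Function.iterate_injOn_Iio_minimalPeriod hi' hj' hij
  rw [Finset.sum_congr rfl hfiber, Finset.sum_const, smul_eq_mul] at hcard
  have hcycles : cyclesOfLength n = orb '' (E n) := by
    ext c
    simp only [cyclesOfLength, Set.mem_setOf_eq, Set.mem_image]
    constructor
    · rintro ⟨x, h1, h2, h3, rfl⟩
      exact ⟨x, (mem_E_iff hn).2 ⟨h1, h2, h3⟩, rfl⟩
    · rintro ⟨x, hx, rfl⟩
      obtain ⟨h1, h2, h3⟩ := (mem_E_iff hn).1 hx
      exact ⟨x, h1, h2, h3, rfl⟩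
  have h1 : (E n).ncard = hEfin.toFinset.card := Set.ncard_eq_toFinset_card _ hEfin
  have h2 : (cyclesOfLength n).ncard = (hEfin.toFinset.image orb).card := by
    rw [hcycles]
    have : orb '' E n = ↑(hEfin.toFinset.image orb) := by
      rw [Finset.coe_image, Set.Finite.coe_toFinset]
    rw [this, Set.ncard_coe_finset]
  rw [h1, h2, hcard, mul_comm]

end Collatz

theorem stmt_13 (n : ℕ) (hn : 1 ≤ n) :
    (n : ℤ) * (cyclesOfLength n).ncard =
      ∑ d ∈ n.divisors, ArithmeticFunction.moebius d * 2 ^ (n / d) := by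
  rw [← Collatz.E_ncard n hn]
  rw [Collatz.E_card_eq n hn]
  push_cast
  ring
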